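/- There exists a universal constant c > 0 such that with probability at least 1 − 2exp(−c·n), it holds simultaneously for all X₁, X₂ ∈ S_p with σ_max(X₁) ≤ R and σ_max(X₂) ≤ R that |F_n(X₁, Z₁ⁿ) − F_n(X₂, Z₁ⁿ)| ≤ (2K_C + C_μ)·‖X₁ − X₂‖. -/

import Mathlib

open MeasureTheory ProbabilityTheory

attribute [local instance] Matrix.frobeniusNormedAddCommGroup Matrix.frobeniusNormedSpace

/-- Eigenvalues of a real symmetric matrix (junk value `0` otherwise). -/
noncomputable def eigs {p : ℕ} (X : Matrix (Fin p) (Fin p) ℝ) (j : Fin p) : ℝ :=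
  if h : X.IsHermitian then h.eigenvalues j else 0

/-- The largest singular value (spectral norm). -/
noncomputable def sigmaMax {p : ℕ} (X : Matrix (Fin p) (Fin p) ℝ) : ℝ :=
  ⨆ j, Real.sqrt (eigs (X.transpose * X) j)

/-- Sample average `F_n(X, Z₁ⁿ)`. -/
noncomputable def Fn {p n : ℕ} {W : Type*} (f : Matrix (Fin p) (Fin p) ℝ → W → ℝ)
    (z : Fin n → W) (X : Matrix (Fin p) (Fin p) ℝ) : ℝ :=
  (1 / (n : ℝ)) * ∑ i, f X (z i)

/-- there is a universal constant `c > 0` (depending only on the absolute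
Bernstein constant `cB ∈ (0, 1/2]` of assumption (A4)) such that, with probability at
least `1 − 2·exp(−c·n)`, the sample average `F_n(·, Z₁ⁿ)` is `(2K_C + C_μ)`-Lipschitz
(in the Frobenius norm) on `{X ∈ S_p : σ_max(X) ≤ R}`, simultaneously for all pairs. -/
theorem Fn_uniform_lipschitz_whp (cB : ℝ) (hcB0 : 0 < cB) (hcB : cB ≤ 1 / 2) :
    ∃ c : ℝ, 0 < c ∧
      ∀ (Ω : Type) (q : ℕ) (W : Set (Fin q → ℝ)) [MeasurableSpace Ω]
        (μ : Measure Ω) [IsProbabilityMeasure μ]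
        (p n : ℕ) (f : Matrix (Fin p) (Fin p) ℝ → W → ℝ) (Z : Fin n → Ω → W)
        (C : W → ℝ) (R Cmu KC : ℝ),
        1 ≤ R → 1 ≤ Cmu → 1 ≤ KC →
        (∀ i, Measurable (Z i)) →
        iIndepFun Z μ →
        (∀ i j, IdentDistrib (Z i) (Z j) μ μ) →
        (∀ i, ∫ ω, |C (Z i ω)| ∂μ ≤ Cmu) →
        -- Bernstein-type inequality for the sub-exponential variables `C(Zᵢ) − E C(Zᵢ)`
        (∀ t : ℝ, 0 ≤ t → ∀ aa : Fin n → ℝ,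
          (μ {ω | KC * (Real.sqrt (∑ i, aa i ^ 2) * Real.sqrt t + (⨆ i, |aa i|) * t) <
            |∑ i, aa i * (C (Z i ω) - ∫ ω', C (Z i ω') ∂μ)|}).toReal ≤
              2 * Real.exp (-cB * t)) →
        -- Lipschitz property of `f` (assumption (A4))
        (∀ i, ∀ᵐ ω ∂μ, ∀ X1 X2 : Matrix (Fin p) (Fin p) ℝ,
          X1.PosSemidef → X2.PosSemidef →
          |f X1 (Z i ω) - f X2 (Z i ω)| ≤ C (Z i ω) * ‖X1 - X2‖) →
        1 - 2 * Real.exp (-c * n) ≤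
          (μ {ω | ∀ X1 X2 : Matrix (Fin p) (Fin p) ℝ,
            X1.PosSemidef → sigmaMax X1 ≤ R → X2.PosSemidef → sigmaMax X2 ≤ R →
            |Fn f (fun i => Z i ω) X1 - Fn f (fun i => Z i ω) X2| ≤
              (2 * KC + Cmu) * ‖X1 - X2‖}).toReal := by

  refine ⟨cB, hcB0, ?_⟩
  intro Ω q W _ μ _ p n f Z C R Cmu KC hR hCmu hKC hZmeas hindep hid hint hBern hLip
  set E : Set Ω := {ω | ∀ X1 X2 : Matrix (Fin p) (Fin p) ℝ,
            X1.PosSemidef → sigmaMax X1 ≤ R → X2.PosSemidef → sigmaMax X2 ≤ R →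
            |Fn f (fun i => Z i ω) X1 - Fn f (fun i => Z i ω) X2| ≤
              (2 * KC + Cmu) * ‖X1 - X2‖} with hE
  rcases Nat.eq_zero_or_pos n with hn | hn
  · subst hn
    have h1 : (1:ℝ) - 2 * Real.exp (-cB * (0:ℕ)) ≤ 0 := by
      norm_num [Real.exp_zero]
    exact h1.trans ENNReal.toReal_nonneg
  haveI : Nonempty (Fin n) := ⟨⟨0, hn⟩⟩
  set B : Set Ω := {ω | KC * (Real.sqrt (∑ i : Fin n, (1:ℝ) ^ 2) * Real.sqrt n +
      (⨆ i : Fin n, |(1:ℝ)|) * n) <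
      |∑ i, (1:ℝ) * (C (Z i ω) - ∫ ω', C (Z i ω') ∂μ)|} with hBdef
  have hBmeas : (μ B).toReal ≤ 2 * Real.exp (-cB * n) :=
    hBern n (by positivity) (fun _ => 1)
  set A : Set Ω := {ω | ∀ i, ∀ X1 X2 : Matrix (Fin p) (Fin p) ℝ,
          X1.PosSemidef → X2.PosSemidef →
          |f X1 (Z i ω) - f X2 (Z i ω)| ≤ C (Z i ω) * ‖X1 - X2‖} with hAdef
  have hA : μ Aᶜ = 0 := by
    have := (MeasureTheory.ae_all_iff.mpr hLip)
    simpa [hAdef, Set.compl_setOf, MeasureTheory.ae_iff] using this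
  -- pointwise inclusion
  have hincl : A ∩ Bᶜ ⊆ E := by
    intro ω hω
    obtain ⟨hωA, hωB⟩ := hω
    intro X1 X2 h1 hs1 h2 hs2
    have hnpos : (0:ℝ) < n := by exact_mod_cast hn
    -- bound the sum of C(Z i ω)
    have hS1 : ∑ i : Fin n, (1:ℝ) ^ 2 = (n:ℝ) := by simp
    have hsup : (⨆ i : Fin n, |(1:ℝ)|) = 1 := by simp
    have hBbound : |∑ i, (C (Z i ω) - ∫ ω', C (Z i ω') ∂μ)| ≤ 2 * KC * n := by
      simp only [hBdef, Set.mem_compl_iff, Set.mem_setOf_eq, not_lt, one_mul] at hωB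
      have := hωB
      rw [hS1, hsup] at this
      have hsq : Real.sqrt (n:ℝ) * Real.sqrt (n:ℝ) = (n:ℝ) :=
        Real.mul_self_sqrt (by positivity)
      simp only [one_mul] at this
      rw [hsq] at this
      nlinarith [this]
    have hmean : ∀ i : Fin n, (∫ ω', C (Z i ω') ∂μ) ≤ Cmu := fun i =>
      le_trans (le_trans (le_abs_self _)
        (by simpa [Real.norm_eq_abs] using
          MeasureTheory.norm_integral_le_integral_norm (f := fun ω' => C (Z i ω')) (μ := μ)))
        (hint i)
    have hsumC : ∑ i, C (Z i ω) ≤ (2 * KC + Cmu) * n := by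
      have h1' : ∑ i, C (Z i ω) =
          (∑ i, (C (Z i ω) - ∫ ω', C (Z i ω') ∂μ)) + ∑ i, ∫ ω', C (Z i ω') ∂μ := by
        rw [← Finset.sum_add_distrib]; simp
      have h2' : (∑ i, (C (Z i ω) - ∫ ω', C (Z i ω') ∂μ)) ≤ 2 * KC * n :=
        le_trans (le_abs_self _) hBbound
      have h3' : ∑ i, ∫ ω', C (Z i ω') ∂μ ≤ (n:ℝ) * Cmu := by
        calc ∑ i : Fin n, ∫ ω', C (Z i ω') ∂μ ≤ ∑ i : Fin n, Cmu :=
              Finset.sum_le_sum (fun i _ => hmean i)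
          _ = (n:ℝ) * Cmu := by simp [mul_comm]
      rw [h1']; nlinarith
    -- Lipschitz bound on Fn
    have hFn : |Fn f (fun i => Z i ω) X1 - Fn f (fun i => Z i ω) X2| ≤
        (1 / n) * ((∑ i, C (Z i ω)) * ‖X1 - X2‖) := by
      have hdiff : Fn f (fun i => Z i ω) X1 - Fn f (fun i => Z i ω) X2 =
          (1 / n) * ∑ i, (f X1 (Z i ω) - f X2 (Z i ω)) := by
        simp [Fn, Finset.sum_sub_distrib, mul_sub]
      rw [hdiff, abs_mul, abs_of_nonneg (by positivity : (0:ℝ) ≤ 1 / (n:ℝ))]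
      gcongr
      calc |∑ i, (f X1 (Z i ω) - f X2 (Z i ω))| ≤
            ∑ i, |f X1 (Z i ω) - f X2 (Z i ω)| := Finset.abs_sum_le_sum_abs _ _
        _ ≤ ∑ i, C (Z i ω) * ‖X1 - X2‖ :=
            Finset.sum_le_sum (fun i _ => hωA i X1 X2 h1 h2)
        _ = (∑ i, C (Z i ω)) * ‖X1 - X2‖ := by rw [Finset.sum_mul]
    refine hFn.trans ?_
    have hnorm : (0:ℝ) ≤ ‖X1 - X2‖ := norm_nonneg _
    rw [div_mul_eq_mul_div, one_mul, div_le_iff₀ hnpos]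
    nlinarith [mul_le_mul_of_nonneg_right hsumC hnorm]

  -- measure bookkeeping
  have hEc : μ Eᶜ ≤ μ B := by
    have : Eᶜ ⊆ B ∪ Aᶜ := by
      intro ω hω
      by_contra h
      rw [Set.mem_union] at h
      push_neg at h
      exact hω (hincl ⟨not_not.mp h.2, h.1⟩)
    calc μ Eᶜ ≤ μ (B ∪ Aᶜ) := measure_mono this
      _ ≤ μ B + μ Aᶜ := measure_union_le _ _
      _ = μ B := by rw [hA, add_zero]
  have hEcR : (μ Eᶜ).toReal ≤ 2 * Real.exp (-cB * n) := by
    refine le_trans ?_ hBmeas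
    exact ENNReal.toReal_mono (measure_ne_top μ B) hEc
  have hsum : (1:ℝ) ≤ (μ E).toReal + (μ Eᶜ).toReal := by
    have h2 : μ Set.univ ≤ μ E + μ Eᶜ := by
      rw [← Set.union_compl_self E]; exact measure_union_le _ _
    have h3 : ((μ E + μ Eᶜ)).toReal = (μ E).toReal + (μ Eᶜ).toReal :=
      ENNReal.toReal_add (measure_ne_top μ E) (measure_ne_top μ Eᶜ)
    calc (1:ℝ) = (μ Set.univ).toReal := by simp
      _ ≤ ((μ E + μ Eᶜ)).toReal := ENNReal.toReal_mono
          (by simp [ENNReal.add_ne_top, measure_ne_top]) h2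
      _ = _ := h3
  linarith
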